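/- For any seminormal quasi-crystals Q and Q' of the same type Φ, the quasi-tensor product Q ⊗̈ Q' (with the structure maps defined below on Q × Q') satisfies all the axioms of a seminormal quasi-crystal of type Φ. -/

import Mathlib

/-! ## Root system setting -/

/-- The data of a root system `Φ` in a Euclidean space `V`, together with a choice of
simple roots `(α_i)_{i ∈ ι}` and a weight lattice `Λ`, with the integer-valued coroot
pairing `pair λ i = ⟨λ, α_i^∨⟩ = 2⟪λ, α_i⟫/⟪α_i, α_i⟫` on the weight lattice. -/
structure QCSetting (V : Type*) [NormedAddCommGroup V] [InnerProductSpace ℝ V]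
    (ι : Type*) where
  Φ : Set V
  finite : Φ.Finite
  nonempty : Φ.Nonempty
  zero_not_mem : (0 : V) ∉ Φ
  reflect_mem : ∀ a ∈ Φ, ∀ b ∈ Φ, b - (2 * (inner ℝ b a : ℝ) / (inner ℝ a a : ℝ)) • a ∈ Φ
  smul_root : ∀ a ∈ Φ, ∀ k : ℝ, k • a ∈ Φ → k = 1 ∨ k = -1
  simple : ι → V
  simple_mem : ∀ i, simple i ∈ Φ
  simple_indep : LinearIndependent ℝ simple
  Λ : AddSubgroup V
  lattice_spans : Submodule.span ℝ (Λ : Set V) = ⊤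
  root_mem_lattice : ∀ a ∈ Φ, a ∈ Λ
  pair : Λ → ι → ℤ
  pair_spec : ∀ (v : Λ) (i : ι),
    (pair v i : ℝ) = 2 * (inner ℝ (v : V) (simple i) : ℝ) / (inner ℝ (simple i) (simple i) : ℝ)

variable {V : Type*} [NormedAddCommGroup V] [InnerProductSpace ℝ V] {ι : Type*}

/-! ## Quasi-crystals -/

/-- The structure maps of a quasi-crystal of type `S` on an underlying set `Q`:
a weight map `wt` with values in the weight lattice, partial quasi-Kashiwara operators
`e i, f i : Q → Q ⊔ {⊥}` (realized as `Option`-valued maps, `none` playing the role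
of `⊥`), and maps `ε i, φ i : Q → ℤ ∪ {+∞}` (realized as `WithTop ℤ`). -/
structure QC (S : QCSetting V ι) (Q : Type*) where
  wt : Q → S.Λ
  e : ι → Q → Option Q
  f : ι → Q → Option Q
  ε : ι → Q → WithTop ℤ
  φ : ι → Q → WithTop ℤ

/-- `k`-fold iteration of a partial map `g : Q → Option Q` starting at `x`. -/
def optIter {Q : Type*} (g : Q → Option Q) (k : ℕ) (x : Q) : Option Q :=
  (fun o => o.bind g)^[k] (some x)

/-- The axioms of a seminormal quasi-crystal. -/
structure QC.IsSeminormal {S : QCSetting V ι} {Q : Type*} (𝒬 : QC S Q) : Prop where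
  phi_eq : ∀ i x, 𝒬.φ i x = 𝒬.ε i x + ((S.pair (𝒬.wt x) i : ℤ) : WithTop ℤ)
  wt_e : ∀ i x y, 𝒬.e i x = some y → (𝒬.wt y : V) = (𝒬.wt x : V) + S.simple i
  wt_f : ∀ i x y, 𝒬.f i x = some y → (𝒬.wt y : V) = (𝒬.wt x : V) - S.simple i
  e_iff_f : ∀ i x y, 𝒬.e i x = some y ↔ 𝒬.f i y = some x
  e_of_top : ∀ i x, 𝒬.ε i x = ⊤ → 𝒬.e i x = none
  f_of_top : ∀ i x, 𝒬.ε i x = ⊤ → 𝒬.f i x = none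
  eps_spec : ∀ i x, 𝒬.ε i x ≠ ⊤ → ∃ n : ℕ, 𝒬.ε i x = ((n : ℤ) : WithTop ℤ) ∧
    IsGreatest {k : ℕ | (optIter (𝒬.e i) k x).isSome} n
  phi_spec : ∀ i x, 𝒬.ε i x ≠ ⊤ → ∃ n : ℕ, 𝒬.φ i x = ((n : ℤ) : WithTop ℤ) ∧
    IsGreatest {k : ℕ | (optIter (𝒬.f i) k x).isSome} n

/-- A seminormal crystal is a seminormal quasi-crystal in which `ε i x ≠ +∞` always. -/
def QC.IsSeminormalCrystal {S : QCSetting V ι} {Q : Type*} (𝒬 : QC S Q) : Prop :=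
  𝒬.IsSeminormal ∧ ∀ i x, 𝒬.ε i x ≠ ⊤

/-! ## Tensor product -/

/-- The tensor product of two quasi-crystals of the same type. -/
noncomputable def QC.tensor {S : QCSetting V ι} {Q Q' : Type*} (𝒬 : QC S Q) (𝒬' : QC S Q') :
    QC S (Q × Q') where
  wt p := 𝒬.wt p.1 + 𝒬'.wt p.2
  ε i p := max (𝒬.ε i p.1) (𝒬'.ε i p.2 + ((-(S.pair (𝒬.wt p.1) i) : ℤ) : WithTop ℤ))
  φ i p := max (𝒬.φ i p.1 + ((S.pair (𝒬'.wt p.2) i : ℤ) : WithTop ℤ)) (𝒬'.φ i p.2)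
  e i p := if 𝒬'.ε i p.2 ≤ 𝒬.φ i p.1
    then (𝒬.e i p.1).map (fun y => (y, p.2))
    else (𝒬'.e i p.2).map (fun y => (p.1, y))
  f i p := if 𝒬'.ε i p.2 < 𝒬.φ i p.1
    then (𝒬.f i p.1).map (fun y => (y, p.2))
    else (𝒬'.f i p.2).map (fun y => (p.1, y))

/-! ## Quasi-tensor product -/

/-- The (inverse-free) quasi-tensor product of two quasi-crystals of the same type. -/
noncomputable def QC.qtensor {S : QCSetting V ι} {Q Q' : Type*} (𝒬 : QC S Q) (𝒬' : QC S Q') :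
    QC S (Q × Q') where
  wt p := 𝒬.wt p.1 + 𝒬'.wt p.2
  ε i p := if 0 < 𝒬.φ i p.1 ∧ 0 < 𝒬'.ε i p.2 then ⊤
    else max (𝒬.ε i p.1) (𝒬'.ε i p.2 + ((-(S.pair (𝒬.wt p.1) i) : ℤ) : WithTop ℤ))
  φ i p := if 0 < 𝒬.φ i p.1 ∧ 0 < 𝒬'.ε i p.2 then ⊤
    else max (𝒬.φ i p.1 + ((S.pair (𝒬'.wt p.2) i : ℤ) : WithTop ℤ)) (𝒬'.φ i p.2)
  e i p := if 0 < 𝒬.φ i p.1 ∧ 0 < 𝒬'.ε i p.2 then none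
    else if 𝒬'.ε i p.2 ≤ 𝒬.φ i p.1 then (𝒬.e i p.1).map (fun y => (y, p.2))
    else (𝒬'.e i p.2).map (fun y => (p.1, y))
  f i p := if 0 < 𝒬.φ i p.1 ∧ 0 < 𝒬'.ε i p.2 then none
    else if 𝒬'.ε i p.2 < 𝒬.φ i p.1 then (𝒬.f i p.1).map (fun y => (y, p.2))
    else (𝒬'.f i p.2).map (fun y => (p.1, y))

/-! ## Homomorphisms -/

/-- A quasi-crystal homomorphism `ψ : 𝒬 → 𝒬'`, i.e. a map `Q ⊔ {⊥} → Q' ⊔ {⊥}`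
(realized on `Option`s, `none` playing the role of `⊥`) compatible with the structure
maps in the appropriate sense. -/
structure QCHom {S : QCSetting V ι} {Q Q' : Type*} (𝒬 : QC S Q) (𝒬' : QC S Q') where
  toFun : Option Q → Option Q'
  map_none : toFun none = none
  wt_eq : ∀ x y, toFun (some x) = some y → 𝒬'.wt y = 𝒬.wt x
  eps_eq : ∀ i x y, toFun (some x) = some y → 𝒬'.ε i y = 𝒬.ε i x
  phi_eq : ∀ i x y, toFun (some x) = some y → 𝒬'.φ i y = 𝒬.φ i x
  comm_e : ∀ i x x' y y', 𝒬.e i x = some x' → toFun (some x) = some y →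
    toFun (some x') = some y' → 𝒬'.e i y = some y'
  comm_f : ∀ i x x' y y', 𝒬.f i x = some x' → toFun (some x) = some y →
    toFun (some x') = some y' → 𝒬'.f i y = some y'

/-! ## The free `⊗`-quasi-crystal monoid -/

/-- Weight of a word: the sum of the weights of its letters. -/
def freeWt {S : QCSetting V ι} {Q : Type*} (𝒬 : QC S Q) : List Q → S.Λ
  | [] => 0
  | x :: w => 𝒬.wt x + freeWt 𝒬 w

/-- The map `ε̈_i` of the free `⊗`-quasi-crystal monoid. -/
def freeEps {S : QCSetting V ι} {Q : Type*} (𝒬 : QC S Q) (i : ι) : List Q → WithTop ℤ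
  | [] => 0
  | x :: w => max (𝒬.ε i x) (freeEps 𝒬 i w + ((-(S.pair (𝒬.wt x) i) : ℤ) : WithTop ℤ))

/-- The map `φ̈_i` of the free `⊗`-quasi-crystal monoid. -/
def freePhi {S : QCSetting V ι} {Q : Type*} (𝒬 : QC S Q) (i : ι) : List Q → WithTop ℤ
  | [] => 0
  | x :: w => max (𝒬.φ i x + ((S.pair (freeWt 𝒬 w) i : ℤ) : WithTop ℤ)) (freePhi 𝒬 i w)

/-- The operator `ë_i` of the free `⊗`-quasi-crystal monoid. -/
noncomputable def freeE {S : QCSetting V ι} {Q : Type*} (𝒬 : QC S Q) (i : ι) : List Q → Option (List Q)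
  | [] => none
  | x :: w => if freeEps 𝒬 i w ≤ 𝒬.φ i x
      then (𝒬.e i x).map (· :: w)
      else (freeE 𝒬 i w).map (x :: ·)

/-- The operator `f̈_i` of the free `⊗`-quasi-crystal monoid. -/
noncomputable def freeF {S : QCSetting V ι} {Q : Type*} (𝒬 : QC S Q) (i : ι) : List Q → Option (List Q)
  | [] => none
  | x :: w => if freeEps 𝒬 i w < 𝒬.φ i x
      then (𝒬.f i x).map (· :: w)
      else (freeF 𝒬 i w).map (x :: ·)

/-- The quasi-crystal structure of the free `⊗`-quasi-crystal monoid `F^⊗(𝒬)`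
on the free monoid `Q*`. -/
noncomputable def freeTensorQC {S : QCSetting V ι} {Q : Type*} (𝒬 : QC S Q) : QC S (FreeMonoid Q) where
  wt w := freeWt 𝒬 (FreeMonoid.toList w)
  ε i w := freeEps 𝒬 i (FreeMonoid.toList w)
  φ i w := freePhi 𝒬 i (FreeMonoid.toList w)
  e i w := (freeE 𝒬 i (FreeMonoid.toList w)).map (fun l => FreeMonoid.ofList l)
  f i w := (freeF 𝒬 i (FreeMonoid.toList w)).map (fun l => FreeMonoid.ofList l)

/-! ## The free `⊗̈`-quasi-crystal monoid -/

/-- The map `ε̈_i` of the free `⊗̈`-quasi-crystal monoid. -/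
noncomputable def qfreeEps {S : QCSetting V ι} {Q : Type*} (𝒬 : QC S Q) (i : ι) : List Q → WithTop ℤ
  | [] => 0
  | x :: w => if 0 < 𝒬.φ i x ∧ 0 < qfreeEps 𝒬 i w then ⊤
      else max (𝒬.ε i x) (qfreeEps 𝒬 i w + ((-(S.pair (𝒬.wt x) i) : ℤ) : WithTop ℤ))

/-- The map `φ̈_i` of the free `⊗̈`-quasi-crystal monoid. -/
noncomputable def qfreePhi {S : QCSetting V ι} {Q : Type*} (𝒬 : QC S Q) (i : ι) : List Q → WithTop ℤ
  | [] => 0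
  | x :: w => if 0 < 𝒬.φ i x ∧ 0 < qfreeEps 𝒬 i w then ⊤
      else max (𝒬.φ i x + ((S.pair (freeWt 𝒬 w) i : ℤ) : WithTop ℤ)) (qfreePhi 𝒬 i w)

/-- The operator `ë_i` of the free `⊗̈`-quasi-crystal monoid. -/
noncomputable def qfreeE {S : QCSetting V ι} {Q : Type*} (𝒬 : QC S Q) (i : ι) : List Q → Option (List Q)
  | [] => none
  | x :: w => if 0 < 𝒬.φ i x ∧ 0 < qfreeEps 𝒬 i w then none
      else if qfreeEps 𝒬 i w ≤ 𝒬.φ i x then (𝒬.e i x).map (· :: w)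
      else (qfreeE 𝒬 i w).map (x :: ·)

/-- The operator `f̈_i` of the free `⊗̈`-quasi-crystal monoid. -/
noncomputable def qfreeF {S : QCSetting V ι} {Q : Type*} (𝒬 : QC S Q) (i : ι) : List Q → Option (List Q)
  | [] => none
  | x :: w => if 0 < 𝒬.φ i x ∧ 0 < qfreeEps 𝒬 i w then none
      else if qfreeEps 𝒬 i w < 𝒬.φ i x then (𝒬.f i x).map (· :: w)
      else (qfreeF 𝒬 i w).map (x :: ·)

/-- The quasi-crystal structure of the free `⊗̈`-quasi-crystal monoid `F^⊗̈(𝒬)`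
on the free monoid `Q*`. -/
noncomputable def freeQTensorQC {S : QCSetting V ι} {Q : Type*} (𝒬 : QC S Q) : QC S (FreeMonoid Q) where
  wt w := freeWt 𝒬 (FreeMonoid.toList w)
  ε i w := qfreeEps 𝒬 i (FreeMonoid.toList w)
  φ i w := qfreePhi 𝒬 i (FreeMonoid.toList w)
  e i w := (qfreeE 𝒬 i (FreeMonoid.toList w)).map (fun l => FreeMonoid.ofList l)
  f i w := (qfreeF 𝒬 i (FreeMonoid.toList w)).map (fun l => FreeMonoid.ofList l)

/-! ## Connected components, plactic and hypoplactic congruences -/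

/-- Two elements are connected in the quasi-crystal graph if they are related by the
reflexive-symmetric-transitive closure of the edge relation given by the
quasi-Kashiwara operators. -/
def QC.conn {S : QCSetting V ι} {Q : Type*} (𝒬 : QC S Q) : Q → Q → Prop :=
  Relation.EqvGen (fun x y => ∃ i, 𝒬.f i x = some y ∨ 𝒬.f i y = some x ∨
    𝒬.e i x = some y ∨ 𝒬.e i y = some x)

/-- The connected component `𝒬(x)` of a quasi-crystal `𝒬` containing `x`, as a
quasi-crystal on the subtype of elements connected with `x`. -/
def QC.compQC {S : QCSetting V ι} {Q : Type*} (𝒬 : QC S Q) (x : Q) :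
    QC S {y : Q // 𝒬.conn x y} where
  wt y := 𝒬.wt y.1
  ε i y := 𝒬.ε i y.1
  φ i y := 𝒬.φ i y.1
  e i y := (𝒬.e i y.1).pmap (fun z hz => (⟨z, hz⟩ : {y : Q // 𝒬.conn x y}))
    (fun z hz => Relation.EqvGen.trans _ _ _ y.2
      (Relation.EqvGen.rel _ _ ⟨i, Or.inr (Or.inr (Or.inl hz))⟩))
  f i y := (𝒬.f i y.1).pmap (fun z hz => (⟨z, hz⟩ : {y : Q // 𝒬.conn x y}))
    (fun z hz => Relation.EqvGen.trans _ _ _ y.2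
      (Relation.EqvGen.rel _ _ ⟨i, Or.inl hz⟩))

/-- The plactic congruence: `u ≈ v` iff there is a quasi-crystal isomorphism between the
connected components of `u` and `v` in `F^⊗(𝒬)` mapping `u` to `v`. -/
def placticRel {S : QCSetting V ι} {Q : Type*} (𝒬 : QC S Q)
    (u v : FreeMonoid Q) : Prop :=
  ∃ ψ : QCHom ((freeTensorQC 𝒬).compQC u) ((freeTensorQC 𝒬).compQC v),
    Function.Bijective ψ.toFun ∧
    ψ.toFun (some ⟨u, Relation.EqvGen.refl u⟩) = some ⟨v, Relation.EqvGen.refl v⟩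

/-- The hypoplactic congruence: `u ∼̈ v` iff there is a quasi-crystal isomorphism between
the connected components of `u` and `v` in `F^⊗̈(𝒬)` mapping `u` to `v`. -/
def hypoRel {S : QCSetting V ι} {Q : Type*} (𝒬 : QC S Q)
    (u v : FreeMonoid Q) : Prop :=
  ∃ ψ : QCHom ((freeQTensorQC 𝒬).compQC u) ((freeQTensorQC 𝒬).compQC v),
    Function.Bijective ψ.toFun ∧
    ψ.toFun (some ⟨u, Relation.EqvGen.refl u⟩) = some ⟨v, Relation.EqvGen.refl v⟩

/-! ## Quasi-crystal monoids -/

/-- A monoid is equidivisible if whenever `x₁y₁ = x₂y₂` one of the factorizations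
refines the other. -/
def Equidivisible (M : Type*) [Monoid M] : Prop :=
  ∀ x₁ x₂ y₁ y₂ : M, x₁ * y₁ = x₂ * y₂ →
    ∃ z : M, (x₂ = x₁ * z ∧ y₁ = z * y₂) ∨ (x₁ = x₂ * z ∧ y₂ = z * y₁)

/-- A `⊗`-quasi-crystal monoid: a seminormal quasi-crystal structure on a monoid whose
structure maps interact with the multiplication by the tensor-product rules. -/
structure IsTensorQCMon {S : QCSetting V ι} {M : Type*} [Monoid M] (𝒬 : QC S M) : Prop where
  seminormal : 𝒬.IsSeminormal
  wt_mul : ∀ x y, 𝒬.wt (x * y) = 𝒬.wt x + 𝒬.wt y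
  eps_mul : ∀ i x y, 𝒬.ε i (x * y) =
    max (𝒬.ε i x) (𝒬.ε i y + ((-(S.pair (𝒬.wt x) i) : ℤ) : WithTop ℤ))
  phi_mul : ∀ i x y, 𝒬.φ i (x * y) =
    max (𝒬.φ i x + ((S.pair (𝒬.wt y) i : ℤ) : WithTop ℤ)) (𝒬.φ i y)
  e_mul : ∀ i x y, 𝒬.e i (x * y) =
    if 𝒬.ε i y ≤ 𝒬.φ i x then (𝒬.e i x).map (· * y) else (𝒬.e i y).map (x * ·)
  f_mul : ∀ i x y, 𝒬.f i (x * y) =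
    if 𝒬.ε i y < 𝒬.φ i x then (𝒬.f i x).map (· * y) else (𝒬.f i y).map (x * ·)

/-- A `⊗̈`-quasi-crystal monoid: a seminormal quasi-crystal structure on a monoid such
that `x ⊗̈ y ↦ x·y` induces a quasi-crystal homomorphism `M ⊗̈ M → M`. -/
def IsQTensorQCMon {S : QCSetting V ι} {M : Type*} [Monoid M] (𝒬 : QC S M) : Prop :=
  𝒬.IsSeminormal ∧
  ∃ ψ : QCHom (𝒬.qtensor 𝒬) 𝒬, ψ.toFun = Option.map (fun p => p.1 * p.2)

/-! ## The bicyclic monoid with zero `B₀` and the monoid `Z₀` -/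

/-- The bicyclic monoid `⟨−, + | (+)(−) = ε⟩`: elements are normal forms `(−)^a(+)^b`. -/
structure Bic where
  neg : ℕ
  pos : ℕ
deriving DecidableEq

instance : Mul Bic :=
  ⟨fun x y => ⟨x.neg + (y.neg - x.pos), y.pos + (x.pos - y.neg)⟩⟩

theorem Bic.mul_def (x y : Bic) :
    x * y = ⟨x.neg + (y.neg - x.pos), y.pos + (x.pos - y.neg)⟩ := rfl

instance : One Bic := ⟨⟨0, 0⟩⟩

theorem Bic.one_def : (1 : Bic) = ⟨0, 0⟩ := rfl

instance : Monoid Bic where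
  mul_assoc x y z := by
    simp only [Bic.mul_def, Bic.mk.injEq]
    omega
  one_mul x := by
    simp only [Bic.one_def, Bic.mul_def]
    cases x
    simp only [Bic.mk.injEq]
    omega
  mul_one x := by
    simp only [Bic.one_def, Bic.mul_def]
    cases x
    simp only [Bic.mk.injEq]
    omega

/-- The bicyclic monoid with a zero element adjoined,
`B₀ = ⟨0, −, + | (+)(−) = ε, 0x = x0 = 0⟩`. -/
abbrev B0 : Type := WithZero Bic

/-- The monoid `Z₀ = ⟨0, −, + | (+)(−) = 0, 0x = x0 = 0⟩`: the nonzero elements are the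
normal forms `(−)^a(+)^b`. -/
inductive Z0 : Type
  | zero : Z0
  | word : ℕ → ℕ → Z0
deriving DecidableEq

instance : Mul Z0 :=
  ⟨fun x y => match x, y with
    | Z0.zero, _ => Z0.zero
    | _, Z0.zero => Z0.zero
    | Z0.word a b, Z0.word c d =>
        if 0 < b ∧ 0 < c then Z0.zero else Z0.word (a + c) (b + d)⟩

instance : One Z0 := ⟨Z0.word 0 0⟩

instance : Zero Z0 := ⟨Z0.zero⟩

theorem Z0.one_def : (1 : Z0) = Z0.word 0 0 := rfl
theorem Z0.zero_def : (0 : Z0) = Z0.zero := rfl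
theorem Z0.zero_mul' (x : Z0) : Z0.zero * x = Z0.zero := by cases x <;> rfl
theorem Z0.mul_zero' (x : Z0) : x * Z0.zero = Z0.zero := by cases x <;> rfl
theorem Z0.word_mul_word (a b c d : ℕ) :
    Z0.word a b * Z0.word c d =
      if 0 < b ∧ 0 < c then Z0.zero else Z0.word (a + c) (b + d) := rfl

instance : MonoidWithZero Z0 where
  mul_assoc x y z := by
    cases x <;> cases y <;> cases z <;>
      simp only [Z0.zero_mul', Z0.mul_zero', Z0.word_mul_word]
    · split_ifs <;> simp_all [Z0.zero_mul', Z0.mul_zero', Z0.word_mul_word] <;>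
        split_ifs <;> simp_all <;> omega
  one_mul x := by
    cases x
    · rfl
    · simp [Z0.one_def, Z0.word_mul_word]
  mul_one x := by
    cases x
    · rfl
    · simp [Z0.one_def, Z0.word_mul_word]
  zero_mul x := by cases x <;> rfl
  mul_zero x := by cases x <;> rfl

/-! ## Signature maps -/

/-- The `i`-signature map for the tensor product `⊗`:
`sgn_i^⊗(w) = 0` if `ε̈_i(w) = +∞`, and `(−)^{ε̈_i(w)}(+)^{φ̈_i(w)}` otherwise. -/
noncomputable def tsgn {V : Type*} [NormedAddCommGroup V] [InnerProductSpace ℝ V] {ι : Type*}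
    {S : QCSetting V ι} {Q : Type*} (𝒬 : QC S Q) (i : ι) (w : FreeMonoid Q) : B0 :=
  if freeEps 𝒬 i (FreeMonoid.toList w) = ⊤ then 0
  else ↑(Bic.mk (WithTop.untopD 0 (freeEps 𝒬 i (FreeMonoid.toList w))).toNat
      (WithTop.untopD 0 (freePhi 𝒬 i (FreeMonoid.toList w))).toNat)

/-- The `i`-signature map for the quasi-tensor product `⊗̈`:
`sgn_i^⊗̈(w) = 0` if `ε̈_i(w) = +∞`, and `(−)^{ε̈_i(w)}(+)^{φ̈_i(w)}` otherwise. -/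
noncomputable def qsgn {V : Type*} [NormedAddCommGroup V] [InnerProductSpace ℝ V] {ι : Type*}
    {S : QCSetting V ι} {Q : Type*} (𝒬 : QC S Q) (i : ι) (w : FreeMonoid Q) : Z0 :=
  if qfreeEps 𝒬 i (FreeMonoid.toList w) = ⊤ then 0
  else Z0.word (WithTop.untopD 0 (qfreeEps 𝒬 i (FreeMonoid.toList w))).toNat
      (WithTop.untopD 0 (qfreePhi 𝒬 i (FreeMonoid.toList w))).toNat

namespace QTAux

theorem optIter_zero {Q : Type*} (g : Q → Option Q) (x : Q) : optIter g 0 x = some x := rfl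

theorem optIter_one {Q : Type*} (g : Q → Option Q) (x : Q) : optIter g 1 x = g x := rfl

theorem optIter_succ {Q : Type*} (g : Q → Option Q) (k : ℕ) (x : Q) :
    optIter g (k+1) x = (optIter g k x).bind g := Function.iterate_succ_apply' _ _ _

theorem optIter_shift {Q : Type*} {g : Q → Option Q} {x x' : Q} (h : g x = some x')
    (k : ℕ) : optIter g (k+1) x = optIter g k x' := by
  simp [optIter, Function.iterate_succ_apply, h]

theorem optIter_isSome_of_succ {Q : Type*} {g : Q → Option Q} {x : Q} {k : ℕ}
    (h : (optIter g (k+1) x).isSome) : (optIter g k x).isSome := by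
  rw [optIter_succ] at h
  cases hk : optIter g k x <;> simp [hk] at h ⊢

theorem optIter_isSome_mono {Q : Type*} {g : Q → Option Q} {x : Q} {j k : ℕ}
    (hjk : j ≤ k) (h : (optIter g k x).isSome) : (optIter g j x).isSome := by
  induction k with
  | zero => obtain rfl := Nat.le_zero.mp hjk; exact h
  | succ k ih =>
    rcases Nat.eq_or_lt_of_le hjk with rfl | hlt
    · exact h
    · exact ih (by omega) (optIter_isSome_of_succ h)

theorem greatest_countdown {R : Type*} (E : R → Option R) (μ : R → WithTop ℤ)
    (H : ∀ r (n : ℕ), μ r = ((n : ℤ) : WithTop ℤ) →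
      (n = 0 → E r = none) ∧
      ∀ m : ℕ, n = m + 1 → ∃ r', E r = some r' ∧ μ r' = ((m : ℤ) : WithTop ℤ)) :
    ∀ (n : ℕ) (r : R), μ r = ((n : ℤ) : WithTop ℤ) →
      IsGreatest {k : ℕ | (optIter E k r).isSome} n := by
  intro n
  induction n with
  | zero =>
    intro r hr
    have hE := (H r 0 hr).1 rfl
    constructor
    · simp [Set.mem_setOf_eq, optIter_zero]
    · intro k hk
      by_contra hk0
      have h1 : (optIter E 1 r).isSome := optIter_isSome_mono (by omega) hk
      rw [optIter_one, hE] at h1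
      simp at h1
  | succ m ih =>
    intro r hr
    obtain ⟨r', hEr, hμ⟩ := (H r (m+1) hr).2 m rfl
    have ihr := ih r' hμ
    constructor
    · show (optIter E (m+1) r).isSome
      rw [optIter_shift hEr]; exact ihr.1
    · intro k hk
      cases k with
      | zero => omega
      | succ j =>
        have hj : (optIter E j r').isSome := by
          rw [← optIter_shift hEr]; exact hk
        exact Nat.succ_le_succ (ihr.2 hj)

variable {S : QCSetting V ι}

theorem pair_add (u v : S.Λ) (i : ι) : S.pair (u + v) i = S.pair u i + S.pair v i := by
  have h1 := S.pair_spec u i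
  have h2 := S.pair_spec v i
  have h3 := S.pair_spec (u + v) i
  have : ((S.pair (u+v) i : ℤ) : ℝ) = ((S.pair u i + S.pair v i : ℤ) : ℝ) := by
    push_cast
    rw [h1, h2, h3]
    have : ((↑(u + v) : V)) = (u : V) + (v : V) := rfl
    rw [this, inner_add_left]
    ring
  exact_mod_cast this

theorem finVals {Q : Type*} {𝒬 : QC S Q} (h : 𝒬.IsSeminormal) {i : ι} {x : Q}
    (hx : 𝒬.ε i x ≠ ⊤) :
    ∃ a b : ℕ, 𝒬.ε i x = ((a : ℤ) : WithTop ℤ) ∧ 𝒬.φ i x = ((b : ℤ) : WithTop ℤ) := by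
  obtain ⟨a, ha, _⟩ := h.eps_spec i x hx
  obtain ⟨b, hb, _⟩ := h.phi_spec i x hx
  exact ⟨a, b, ha, hb⟩

theorem e_char {Q : Type*} {𝒬 : QC S Q} (h : 𝒬.IsSeminormal) {i : ι} {x : Q} {a : ℕ}
    (ha : 𝒬.ε i x = ((a : ℤ) : WithTop ℤ)) :
    (a = 0 → 𝒬.e i x = none) ∧ (0 < a → (𝒬.e i x).isSome) := by
  have hx : 𝒬.ε i x ≠ ⊤ := ha ▸ WithTop.coe_ne_top
  obtain ⟨n, hn, hG⟩ := h.eps_spec i x hx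
  have hna : n = a := by
    rw [ha] at hn; exact_mod_cast (WithTop.coe_inj.mp hn.symm)
  subst hna
  constructor
  · intro h0
    subst h0
    cases he : 𝒬.e i x with
    | none => rfl
    | some y =>
      have : (optIter (𝒬.e i) 1 x).isSome := by rw [optIter_one, he]; rfl
      exact absurd (hG.2 this) (by omega)
  · intro hpos
    have := optIter_isSome_mono hpos hG.1
    rwa [optIter_one] at this

theorem f_char {Q : Type*} {𝒬 : QC S Q} (h : 𝒬.IsSeminormal) {i : ι} {x : Q}
    (hx : 𝒬.ε i x ≠ ⊤) {b : ℕ} (hb : 𝒬.φ i x = ((b : ℤ) : WithTop ℤ)) :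
    (b = 0 → 𝒬.f i x = none) ∧ (0 < b → (𝒬.f i x).isSome) := by
  obtain ⟨n, hn, hG⟩ := h.phi_spec i x hx
  have hna : n = b := by
    rw [hb] at hn; exact_mod_cast (WithTop.coe_inj.mp hn.symm)
  subst hna
  constructor
  · intro h0
    subst h0
    cases he : 𝒬.f i x with
    | none => rfl
    | some y =>
      have : (optIter (𝒬.f i) 1 x).isSome := by rw [optIter_one, he]; rfl
      exact absurd (hG.2 this) (by omega)
  · intro hpos
    have := optIter_isSome_mono hpos hG.1
    rwa [optIter_one] at this

theorem stepE {Q : Type*} {𝒬 : QC S Q} (h : 𝒬.IsSeminormal) {i : ι} {x x' : Q}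
    (he : 𝒬.e i x = some x') :
    ∃ a b : ℕ, 𝒬.ε i x = (((a : ℤ) + 1 : ℤ) : WithTop ℤ) ∧
      𝒬.ε i x' = ((a : ℤ) : WithTop ℤ) ∧
      𝒬.φ i x = ((b : ℤ) : WithTop ℤ) ∧
      𝒬.φ i x' = (((b : ℤ) + 1 : ℤ) : WithTop ℤ) := by
  have hfx' : 𝒬.f i x' = some x := (h.e_iff_f i x x').mp he
  have hx : 𝒬.ε i x ≠ ⊤ := fun ht => by simp [h.e_of_top i x ht] at he
  have hx' : 𝒬.ε i x' ≠ ⊤ := fun ht => by simp [h.f_of_top i x' ht] at hfx'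
  obtain ⟨n, hn, hGn⟩ := h.eps_spec i x hx
  obtain ⟨n', hn', hGn'⟩ := h.eps_spec i x' hx'
  obtain ⟨m, hm, hGm⟩ := h.phi_spec i x hx
  obtain ⟨m', hm', hGm'⟩ := h.phi_spec i x' hx'
  have hnn' : n = n' + 1 := by
    have h1 : n' + 1 ≤ n := by
      apply hGn.2
      show (optIter (𝒬.e i) (n'+1) x).isSome
      rw [optIter_shift he]; exact hGn'.1
    have h2 : 1 ≤ n := hGn.2 (by rw [Set.mem_setOf_eq, optIter_one, he]; rfl)
    obtain ⟨k, rfl⟩ := Nat.exists_eq_add_of_le h2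
    have h3 : k ≤ n' := by
      apply hGn'.2
      show (optIter (𝒬.e i) k x').isSome
      rw [← optIter_shift he]
      have := hGn.1
      simpa [Nat.add_comm] using this
    omega
  have hmm' : m' = m + 1 := by
    have h1 : m + 1 ≤ m' := by
      apply hGm'.2
      show (optIter (𝒬.f i) (m+1) x').isSome
      rw [optIter_shift hfx']; exact hGm.1
    have h2 : 1 ≤ m' := hGm'.2 (by rw [Set.mem_setOf_eq, optIter_one, hfx']; rfl)
    obtain ⟨k, rfl⟩ := Nat.exists_eq_add_of_le h2
    have h3 : k ≤ m := by
      apply hGm.2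
      show (optIter (𝒬.f i) k x).isSome
      rw [← optIter_shift hfx']
      have := hGm'.1
      simpa [Nat.add_comm] using this
    omega
  refine ⟨n', m, ?_, hn', hm, ?_⟩
  · rw [hn, hnn']; push_cast; ring_nf
  · rw [hm', hmm']; push_cast; ring_nf


theorem coe_pos' {a : ℤ} : (0 : WithTop ℤ) < (a : WithTop ℤ) ↔ 0 < a := by
  exact_mod_cast Iff.rfl

theorem maxshift (u v : WithTop ℤ) (A B : ℤ) :
    max (u + (A : WithTop ℤ) + (B : WithTop ℤ)) (v + (B : WithTop ℤ)) =
      max u (v + ((-A : ℤ) : WithTop ℤ)) + ((A + B : ℤ) : WithTop ℤ) := by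
  induction u using WithTop.recTopCoe with
  | top => simp
  | coe u =>
    induction v using WithTop.recTopCoe with
    | top => simp
    | coe v =>
      rw [← WithTop.coe_add, ← WithTop.coe_add, ← WithTop.coe_add, ← WithTop.coe_add,
        ← WithTop.coe_max, ← WithTop.coe_max, ← WithTop.coe_add, WithTop.coe_inj]
      omega

theorem lemB {Q Q' : Type*} {𝒬 : QC S Q} {𝒬' : QC S Q'} (h : 𝒬.IsSeminormal)
    (h' : 𝒬'.IsSeminormal) (i : ι) :
    ∀ (p : Q × Q') (n : ℕ), (𝒬.qtensor 𝒬').ε i p = ((n : ℤ) : WithTop ℤ) →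
      ((n = 0 → (𝒬.qtensor 𝒬').e i p = none) ∧
       ∀ m : ℕ, n = m + 1 → ∃ p', (𝒬.qtensor 𝒬').e i p = some p' ∧
         (𝒬.qtensor 𝒬').ε i p' = ((m : ℤ) : WithTop ℤ)) := by
  rintro ⟨x, y⟩ n hn
  simp only [QC.qtensor] at hn ⊢
  split_ifs at hn with hc
  · exact absurd hn (by simp)
  have hex : 𝒬.ε i x ≠ ⊤ := by
    intro ht; rw [ht] at hn; simp at hn
  have hey : 𝒬'.ε i y ≠ ⊤ := by
    intro ht; rw [ht] at hn; simp [WithTop.top_add] at hn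
  obtain ⟨a, b, hax, hbx⟩ := finVals h hex
  obtain ⟨c, d, hcy, hdy⟩ := finVals h' hey
  set A := S.pair (𝒬.wt x) i with hAdef
  have hA : (b : ℤ) = (a : ℤ) + A := by
    have := h.phi_eq i x
    rw [hax, hbx, ← hAdef, ← WithTop.coe_add] at this
    exact_mod_cast this
  rw [hax, hcy, ← WithTop.coe_add, ← WithTop.coe_max, WithTop.coe_inj] at hn
  have hbc : b = 0 ∨ c = 0 := by
    by_contra hcon
    push_neg at hcon
    exact hc ⟨hbx ▸ coe_pos'.mpr (by omega), hcy ▸ coe_pos'.mpr (by omega)⟩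
  constructor
  · intro h0
    subst h0
    have ha0 : a = 0 ∧ (c : ℤ) ≤ (b : ℤ) := by omega
    rw [if_neg hc, if_pos (by rw [hcy, hbx]; exact_mod_cast ha0.2)]
    rw [(e_char h hax).1 ha0.1]
    rfl
  · intro m hm
    rcases Nat.eq_zero_or_pos c with hc0 | hcpos
    · -- c = 0 : move in the first component
      subst hc0
      have hna : (n : ℤ) = (a : ℤ) := by omega
      have hapos : 0 < a := by omega
      obtain ⟨x', he⟩ := Option.isSome_iff_exists.mp ((e_char h hax).2 hapos)
      obtain ⟨a₁, b₁, hεx, hεx', hφx, hφx'⟩ := stepE h he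
      have ha1 : (a : ℤ) = (a₁ : ℤ) + 1 := by
        have := hax.symm.trans hεx; exact_mod_cast this
      have hb1 : (b : ℤ) = (b₁ : ℤ) := by
        have := hbx.symm.trans hφx; exact_mod_cast this
      refine ⟨(x', y), ?_, ?_⟩
      · rw [if_neg hc, if_pos (by rw [hcy, hbx]; exact_mod_cast (by omega : (0:ℤ) ≤ (b:ℤ))),
          he]
        rfl
      · have hA' : S.pair (𝒬.wt x') i = (b₁ : ℤ) + 1 - (a₁ : ℤ) := by
          have := h.phi_eq i x'
          rw [hεx', hφx', ← WithTop.coe_add] at this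
          have := WithTop.coe_inj.mp this
          omega
        rw [if_neg (by rintro ⟨-, hy⟩; rw [hcy] at hy; exact absurd (coe_pos'.mp hy) (by omega))]
        rw [hεx', hcy, hA', ← WithTop.coe_add, ← WithTop.coe_max, WithTop.coe_inj]
        omega
    · -- c > 0, hence b = 0 : move in the second component
      have hb0 : b = 0 := by omega
      obtain ⟨y', he⟩ := Option.isSome_iff_exists.mp ((e_char h' hcy).2 hcpos)
      obtain ⟨c₁, d₁, hεy, hεy', hφy, hφy'⟩ := stepE h' he
      have hc1 : (c : ℤ) = (c₁ : ℤ) + 1 := by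
        have := hcy.symm.trans hεy; exact_mod_cast this
      refine ⟨(x, y'), ?_, ?_⟩
      · have hnle : ¬(𝒬'.ε i y ≤ 𝒬.φ i x) := by
          rw [hcy, hbx]
          intro hle
          have := WithTop.coe_le_coe.mp hle
          omega
        rw [if_neg hc, if_neg hnle, he]
        rfl
      · rw [if_neg (by rintro ⟨hx0, -⟩; rw [hbx] at hx0; exact absurd (coe_pos'.mp hx0) (by omega))]
        rw [hax, hεy', ← hAdef, ← WithTop.coe_add, ← WithTop.coe_max, WithTop.coe_inj]
        omega

theorem lemC {Q Q' : Type*} {𝒬 : QC S Q} {𝒬' : QC S Q'} (h : 𝒬.IsSeminormal)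
    (h' : 𝒬'.IsSeminormal) (i : ι) :
    ∀ (p : Q × Q') (n : ℕ), (𝒬.qtensor 𝒬').φ i p = ((n : ℤ) : WithTop ℤ) →
      ((n = 0 → (𝒬.qtensor 𝒬').f i p = none) ∧
       ∀ m : ℕ, n = m + 1 → ∃ p', (𝒬.qtensor 𝒬').f i p = some p' ∧
         (𝒬.qtensor 𝒬').φ i p' = ((m : ℤ) : WithTop ℤ)) := by
  rintro ⟨x, y⟩ n hn
  simp only [QC.qtensor] at hn ⊢
  split_ifs at hn with hc
  · exact absurd hn (by simp)
  have hex : 𝒬.ε i x ≠ ⊤ := by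
    intro ht
    have := h.phi_eq i x
    rw [ht, WithTop.top_add] at this
    rw [this] at hn; simp at hn
  have hey : 𝒬'.ε i y ≠ ⊤ := by
    intro ht
    have := h'.phi_eq i y
    rw [ht, WithTop.top_add] at this
    rw [this] at hn; simp at hn
  obtain ⟨a, b, hax, hbx⟩ := finVals h hex
  obtain ⟨c, d, hcy, hdy⟩ := finVals h' hey
  set B := S.pair (𝒬'.wt y) i with hBdef
  have hB : (d : ℤ) = (c : ℤ) + B := by
    have := h'.phi_eq i y
    rw [hcy, hdy, ← hBdef, ← WithTop.coe_add] at this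
    exact_mod_cast this
  rw [hbx, hdy, ← WithTop.coe_add, ← WithTop.coe_max, WithTop.coe_inj] at hn
  have hbc : b = 0 ∨ c = 0 := by
    by_contra hcon
    push_neg at hcon
    exact hc ⟨hbx ▸ coe_pos'.mpr (by omega), hcy ▸ coe_pos'.mpr (by omega)⟩
  constructor
  · intro h0
    subst h0
    have hd0 : d = 0 ∧ (b : ℤ) ≤ (c : ℤ) := by omega
    have hnlt : ¬(𝒬'.ε i y < 𝒬.φ i x) := by
      rw [hcy, hbx]
      intro hlt
      have := WithTop.coe_lt_coe.mp hlt
      omega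
    rw [if_neg hc, if_neg hnlt]
    rw [(f_char h' hey hdy).1 hd0.1]
    rfl
  · intro m hm
    rcases Nat.eq_zero_or_pos b with hb0 | hbpos
    · -- b = 0 : move in the second component
      subst hb0
      have hnd : (n : ℤ) = (d : ℤ) := by omega
      have hdpos : 0 < d := by omega
      obtain ⟨y', hf⟩ := Option.isSome_iff_exists.mp ((f_char h' hey hdy).2 hdpos)
      obtain ⟨c₁, d₁, hεy', hεy, hφy', hφy⟩ := stepE h' ((h'.e_iff_f i y' y).mpr hf)
      have hc1 : (c : ℤ) = (c₁ : ℤ) := by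
        have := hcy.symm.trans hεy; exact_mod_cast this
      have hd1 : (d : ℤ) = (d₁ : ℤ) + 1 := by
        have := hdy.symm.trans hφy; exact_mod_cast this
      refine ⟨(x, y'), ?_, ?_⟩
      · have hnlt : ¬(𝒬'.ε i y < 𝒬.φ i x) := by
          rw [hcy, hbx]
          intro hlt
          have := WithTop.coe_lt_coe.mp hlt
          omega
        rw [if_neg hc, if_neg hnlt, hf]
        rfl
      · have hB' : S.pair (𝒬'.wt y') i = (d₁ : ℤ) - ((c₁ : ℤ) + 1) := by
          have := h'.phi_eq i y'
          rw [hεy', hφy', ← WithTop.coe_add] at this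
          have := WithTop.coe_inj.mp this
          omega
        rw [if_neg (by rintro ⟨hx0, -⟩; rw [hbx] at hx0; exact absurd (coe_pos'.mp hx0) (by omega))]
        rw [hbx, hφy', hB', ← WithTop.coe_add, ← WithTop.coe_max, WithTop.coe_inj]
        omega
    · -- b > 0, hence c = 0 : move in the first component
      have hc0 : c = 0 := by omega
      obtain ⟨x', hf⟩ := Option.isSome_iff_exists.mp ((f_char h hex hbx).2 hbpos)
      obtain ⟨a₁, b₁, hεx', hεx, hφx', hφx⟩ := stepE h ((h.e_iff_f i x' x).mpr hf)
      have hb1 : (b : ℤ) = (b₁ : ℤ) + 1 := by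
        have := hbx.symm.trans hφx; exact_mod_cast this
      refine ⟨(x', y), ?_, ?_⟩
      · rw [if_neg hc, if_pos (by rw [hcy, hbx]; exact WithTop.coe_lt_coe.mpr (by omega)), hf]
        rfl
      · rw [if_neg (by rintro ⟨-, hy0⟩; rw [hcy] at hy0; exact absurd (coe_pos'.mp hy0) (by omega))]
        rw [hφx', hdy, ← hBdef, ← WithTop.coe_add, ← WithTop.coe_max, WithTop.coe_inj]
        omega

end QTAux

theorem qtensor_isSeminormal' {S : QCSetting V ι} {Q Q' : Type*} (𝒬 : QC S Q) (𝒬' : QC S Q')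
    (h : 𝒬.IsSeminormal) (h' : 𝒬'.IsSeminormal) :
    (𝒬.qtensor 𝒬').IsSeminormal := by
  refine ⟨?_, ?_, ?_, ?_, ?_, ?_, ?_, ?_⟩
  · -- phi_eq
    rintro i ⟨x, y⟩
    simp only [QC.qtensor]
    split_ifs with hc
    · rw [WithTop.top_add]
    · rw [QTAux.pair_add, h.phi_eq i x, h'.phi_eq i y]
      exact QTAux.maxshift _ _ _ _
  · -- wt_e
    rintro i ⟨x, y⟩ ⟨x', y'⟩ hq
    simp only [QC.qtensor] at hq ⊢
    split_ifs at hq with hc hle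
    · obtain ⟨z, hz, hzq⟩ := Option.map_eq_some_iff.mp hq
      have hzq' : (z, y) = (x', y') := hzq
      injection hzq' with h1 h2; subst h1; subst h2
      rw [AddSubgroup.coe_add, AddSubgroup.coe_add, h.wt_e i x z hz]
      abel
    · obtain ⟨z, hz, hzq⟩ := Option.map_eq_some_iff.mp hq
      have hzq' : (x, z) = (x', y') := hzq
      injection hzq' with h1 h2; subst h1; subst h2
      rw [AddSubgroup.coe_add, AddSubgroup.coe_add, h'.wt_e i y z hz]
      abel
  · -- wt_f
    rintro i ⟨x, y⟩ ⟨x', y'⟩ hq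
    simp only [QC.qtensor] at hq ⊢
    split_ifs at hq with hc hlt
    · obtain ⟨z, hz, hzq⟩ := Option.map_eq_some_iff.mp hq
      have hzq' : (z, y) = (x', y') := hzq
      injection hzq' with h1 h2; subst h1; subst h2
      rw [AddSubgroup.coe_add, AddSubgroup.coe_add, h.wt_f i x z hz]
      abel
    · obtain ⟨z, hz, hzq⟩ := Option.map_eq_some_iff.mp hq
      have hzq' : (x, z) = (x', y') := hzq
      injection hzq' with h1 h2; subst h1; subst h2
      rw [AddSubgroup.coe_add, AddSubgroup.coe_add, h'.wt_f i y z hz]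
      abel
  · -- e_iff_f
    rintro i ⟨x, y⟩ ⟨x', y'⟩
    simp only [QC.qtensor]
    constructor
    · intro hq
      split_ifs at hq with hc hle
      · -- moved in first component
        obtain ⟨z, hz, hzq⟩ := Option.map_eq_some_iff.mp hq
        have hzq' : (z, y) = (x', y') := hzq
        injection hzq' with h1 h2; subst h1; subst h2
        obtain ⟨a₁, b₁, hεx, hεz, hφx, hφz⟩ := QTAux.stepE h hz
        have hfz : 𝒬.f i z = some x := (h.e_iff_f i x z).mp hz
        have hey : 𝒬'.ε i y ≠ ⊤ := by
          intro ht; rw [ht, hφx] at hle; exact absurd hle (by simp)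
        obtain ⟨c, d, hcy, hdy⟩ := QTAux.finVals h' hey
        have hcb : (c : ℤ) ≤ (b₁ : ℤ) := by
          rw [hcy, hφx] at hle; exact_mod_cast hle
        have hc0 : c = 0 := by
          by_contra hcn
          exact hc ⟨hφx ▸ QTAux.coe_pos'.mpr (by omega),
            hcy ▸ QTAux.coe_pos'.mpr (by omega)⟩
        have hnc : ¬(0 < 𝒬.φ i z ∧ 0 < 𝒬'.ε i y) := by
          rintro ⟨-, hy⟩
          rw [hcy] at hy
          exact absurd (QTAux.coe_pos'.mp hy) (by omega)
        have hlt : 𝒬'.ε i y < 𝒬.φ i z := by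
          rw [hcy, hφz]; exact WithTop.coe_lt_coe.mpr (by omega)
        rw [if_neg hnc, if_pos hlt, hfz]
        rfl
      · -- moved in second component
        obtain ⟨z, hz, hzq⟩ := Option.map_eq_some_iff.mp hq
        have hzq' : (x, z) = (x', y') := hzq
        injection hzq' with h1 h2; subst h1; subst h2
        obtain ⟨c₁, d₁, hεy, hεz, hφy, hφz⟩ := QTAux.stepE h' hz
        have hfz : 𝒬'.f i z = some y := (h'.e_iff_f i y z).mp hz
        have hφlt : 𝒬.φ i x < ((((c₁ : ℤ)) + 1 : ℤ) : WithTop ℤ) := hεy ▸ not_le.mp hle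
        have hex : 𝒬.ε i x ≠ ⊤ := by
          intro ht
          rw [h.phi_eq i x, ht, WithTop.top_add] at hφlt
          exact absurd hφlt (by simp)
        obtain ⟨a, b, hax, hbx⟩ := QTAux.finVals h hex
        have hblt : (b : ℤ) < (c₁ : ℤ) + 1 := by
          rw [hbx] at hφlt; exact_mod_cast hφlt
        have hb0 : b = 0 := by
          by_contra hbn
          exact hc ⟨hbx ▸ QTAux.coe_pos'.mpr (by omega),
            hεy ▸ QTAux.coe_pos'.mpr (by omega)⟩
        have hnc : ¬(0 < 𝒬.φ i x ∧ 0 < 𝒬'.ε i z) := by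
          rintro ⟨hx0, -⟩
          rw [hbx] at hx0
          exact absurd (QTAux.coe_pos'.mp hx0) (by omega)
        have hnlt : ¬(𝒬'.ε i z < 𝒬.φ i x) := by
          rw [hεz, hbx]
          intro hlt
          have := WithTop.coe_lt_coe.mp hlt
          omega
        rw [if_neg hnc, if_neg hnlt, hfz]
        rfl
    · intro hq
      split_ifs at hq with hc hlt
      · -- came from first component
        obtain ⟨z, hz, hzq⟩ := Option.map_eq_some_iff.mp hq
        have hzq' : (z, y') = (x, y) := hzq
        injection hzq' with h1 h2; subst h1; subst h2
        have hez : 𝒬.e i z = some x' := (h.e_iff_f i z x').mpr hz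
        obtain ⟨a₁, b₁, hεz, hεx', hφz, hφx'⟩ := QTAux.stepE h hez
        have hey : 𝒬'.ε i y' ≠ ⊤ := by
          intro ht; rw [ht, hφx'] at hlt; exact absurd hlt (by simp)
        obtain ⟨c, d, hcy, hdy⟩ := QTAux.finVals h' hey
        have hcb : (c : ℤ) < (b₁ : ℤ) + 1 := by
          rw [hcy, hφx'] at hlt; exact_mod_cast hlt
        have hc0 : c = 0 := by
          by_contra hcn
          exact hc ⟨hφx' ▸ QTAux.coe_pos'.mpr (by omega),
            hcy ▸ QTAux.coe_pos'.mpr (by omega)⟩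
        have hnc : ¬(0 < 𝒬.φ i z ∧ 0 < 𝒬'.ε i y') := by
          rintro ⟨-, hy⟩
          rw [hcy] at hy
          exact absurd (QTAux.coe_pos'.mp hy) (by omega)
        have hle : 𝒬'.ε i y' ≤ 𝒬.φ i z := by
          rw [hcy, hφz]; exact WithTop.coe_le_coe.mpr (by omega)
        rw [if_neg hnc, if_pos hle, hez]
        rfl
      · -- came from second component
        obtain ⟨z, hz, hzq⟩ := Option.map_eq_some_iff.mp hq
        have hzq' : (x', z) = (x, y) := hzq
        injection hzq' with h1 h2; subst h1; subst h2
        have hez : 𝒬'.e i z = some y' := (h'.e_iff_f i z y').mpr hz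
        obtain ⟨c₁, d₁, hεz, hεy', hφz, hφy'⟩ := QTAux.stepE h' hez
        have hφle : 𝒬.φ i x' ≤ ((c₁ : ℤ) : WithTop ℤ) := hεy' ▸ not_lt.mp hlt
        have hex : 𝒬.ε i x' ≠ ⊤ := by
          intro ht
          rw [h.phi_eq i x', ht, WithTop.top_add] at hφle
          exact absurd hφle (by simp)
        obtain ⟨a, b, hax, hbx⟩ := QTAux.finVals h hex
        have hble : (b : ℤ) ≤ (c₁ : ℤ) := by
          rw [hbx] at hφle; exact_mod_cast hφle
        have hb0 : b = 0 := by
          by_contra hbn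
          exact hc ⟨hbx ▸ QTAux.coe_pos'.mpr (by omega),
            hεy' ▸ QTAux.coe_pos'.mpr (by omega)⟩
        have hnc : ¬(0 < 𝒬.φ i x' ∧ 0 < 𝒬'.ε i z) := by
          rintro ⟨hx0, -⟩
          rw [hbx] at hx0
          exact absurd (QTAux.coe_pos'.mp hx0) (by omega)
        have hnle : ¬(𝒬'.ε i z ≤ 𝒬.φ i x') := by
          rw [hεz, hbx]
          intro hle
          have := WithTop.coe_le_coe.mp hle
          omega
        rw [if_neg hnc, if_neg hnle, hez]
        rfl
  · -- e_of_top
    rintro i ⟨x, y⟩ ht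
    simp only [QC.qtensor] at ht ⊢
    split_ifs at ht with hc
    · rw [if_pos hc]
    · rw [if_neg hc]
      by_cases hex : 𝒬.ε i x = ⊤
      · have hφ : 𝒬.φ i x = ⊤ := by rw [h.phi_eq i x, hex, WithTop.top_add]
        rw [if_pos (by rw [hφ]; exact le_top), h.e_of_top i x hex]
        rfl
      · have hey : 𝒬'.ε i y = ⊤ := by
          rcases max_eq_top.mp ht with h1 | h1
          · exact absurd h1 hex
          · exact (WithTop.add_eq_top.mp h1).resolve_right (by simp)
        obtain ⟨a, b, hax, hbx⟩ := QTAux.finVals h hex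
        have hnle : ¬(𝒬'.ε i y ≤ 𝒬.φ i x) := by
          rw [hey, hbx]; simp
        rw [if_neg hnle, h'.e_of_top i y hey]
        rfl
  · -- f_of_top
    rintro i ⟨x, y⟩ ht
    simp only [QC.qtensor] at ht ⊢
    split_ifs at ht with hc
    · rw [if_pos hc]
    · rw [if_neg hc]
      by_cases hex : 𝒬.ε i x = ⊤
      · have hφ : 𝒬.φ i x = ⊤ := by rw [h.phi_eq i x, hex, WithTop.top_add]
        by_cases hey : 𝒬'.ε i y = ⊤
        · have hnlt : ¬(𝒬'.ε i y < 𝒬.φ i x) := by rw [hey]; exact not_top_lt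
          rw [if_neg hnlt, h'.f_of_top i y hey]
          rfl
        · have hlt : 𝒬'.ε i y < 𝒬.φ i x := by
            rw [hφ]; exact lt_top_iff_ne_top.mpr hey
          rw [if_pos hlt, h.f_of_top i x hex]
          rfl
      · have hey : 𝒬'.ε i y = ⊤ := by
          rcases max_eq_top.mp ht with h1 | h1
          · exact absurd h1 hex
          · exact (WithTop.add_eq_top.mp h1).resolve_right (by simp)
        have hnlt : ¬(𝒬'.ε i y < 𝒬.φ i x) := by rw [hey]; exact not_top_lt
        rw [if_neg hnlt, h'.f_of_top i y hey]
        rfl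
  · -- eps_spec
    rintro i ⟨x, y⟩ hne
    have hc : ¬(0 < 𝒬.φ i x ∧ 0 < 𝒬'.ε i y) := by
      intro hcc
      apply hne
      simp only [QC.qtensor]
      rw [if_pos hcc]
    have hne' : max (𝒬.ε i x) (𝒬'.ε i y + ((-(S.pair (𝒬.wt x) i) : ℤ) : WithTop ℤ)) ≠ ⊤ := by
      intro hmax
      apply hne
      simp only [QC.qtensor]
      rw [if_neg hc]
      exact hmax
    have hex : 𝒬.ε i x ≠ ⊤ := by
      intro htp; rw [htp] at hne'; simp at hne'
    have hey : 𝒬'.ε i y ≠ ⊤ := by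
      intro htp; rw [htp] at hne'; simp [WithTop.top_add] at hne'
    obtain ⟨a, b, hax, hbx⟩ := QTAux.finVals h hex
    obtain ⟨c, d, hcy, hdy⟩ := QTAux.finVals h' hey
    obtain ⟨n, hnval⟩ : ∃ n : ℕ,
        max (a : ℤ) ((c : ℤ) + -(S.pair (𝒬.wt x) i)) = (n : ℤ) :=
      ⟨(max (a : ℤ) ((c : ℤ) + -(S.pair (𝒬.wt x) i))).toNat, by omega⟩
    have hTn : (𝒬.qtensor 𝒬').ε i (x, y) = ((n : ℤ) : WithTop ℤ) := by
      simp only [QC.qtensor]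
      rw [if_neg hc, hax, hcy, ← WithTop.coe_add, ← WithTop.coe_max, hnval]
    exact ⟨n, hTn, QTAux.greatest_countdown _ _ (QTAux.lemB h h' i) n (x, y) hTn⟩
  · -- phi_spec
    rintro i ⟨x, y⟩ hne
    have hc : ¬(0 < 𝒬.φ i x ∧ 0 < 𝒬'.ε i y) := by
      intro hcc
      apply hne
      simp only [QC.qtensor]
      rw [if_pos hcc]
    have hne' : max (𝒬.ε i x) (𝒬'.ε i y + ((-(S.pair (𝒬.wt x) i) : ℤ) : WithTop ℤ)) ≠ ⊤ := by
      intro hmax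
      apply hne
      simp only [QC.qtensor]
      rw [if_neg hc]
      exact hmax
    have hex : 𝒬.ε i x ≠ ⊤ := by
      intro htp; rw [htp] at hne'; simp at hne'
    have hey : 𝒬'.ε i y ≠ ⊤ := by
      intro htp; rw [htp] at hne'; simp [WithTop.top_add] at hne'
    obtain ⟨a, b, hax, hbx⟩ := QTAux.finVals h hex
    obtain ⟨c, d, hcy, hdy⟩ := QTAux.finVals h' hey
    have hB : (d : ℤ) = (c : ℤ) + S.pair (𝒬'.wt y) i := by
      have := h'.phi_eq i y
      rw [hcy, hdy, ← WithTop.coe_add] at this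
      exact_mod_cast this
    obtain ⟨n, hnval⟩ : ∃ n : ℕ,
        max ((b : ℤ) + S.pair (𝒬'.wt y) i) (d : ℤ) = (n : ℤ) :=
      ⟨(max ((b : ℤ) + S.pair (𝒬'.wt y) i) (d : ℤ)).toNat, by omega⟩
    have hTn : (𝒬.qtensor 𝒬').φ i (x, y) = ((n : ℤ) : WithTop ℤ) := by
      simp only [QC.qtensor]
      rw [if_neg hc, hbx, hdy, ← WithTop.coe_add, ← WithTop.coe_max, hnval]
    exact ⟨n, hTn, QTAux.greatest_countdown _ _ (QTAux.lemC h h' i) n (x, y) hTn⟩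

/-- The quasi-tensor product of two seminormal quasi-crystals of type
`Φ` satisfies all the axioms of a seminormal quasi-crystal of type `Φ`. -/
theorem qtensor_isSeminormal {V : Type*} [NormedAddCommGroup V] [InnerProductSpace ℝ V]
    {ι : Type*} {S : QCSetting V ι} {Q Q' : Type*} (𝒬 : QC S Q) (𝒬' : QC S Q')
    (h : 𝒬.IsSeminormal) (h' : 𝒬'.IsSeminormal) :
    (𝒬.qtensor 𝒬').IsSeminormal := by
  exact qtensor_isSeminormal' 𝒬 𝒬' h h'
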